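/- Let a₁ > 0. There exists a constant c₁ > 0 such that for every a₂ > 0, every λ ∈ (0,1), every θ ≥ 0, every α > 0, and all functions f, g : ℤ → ℂ satisfying |f(q)| ≤ λ and |g(q)| ≤ λ^{1+θ} for all q ∈ ℤ, and |f(q)| ≤ a₁/|q|² and |g(q)| ≤ a₂/|q|^{1+α} for all q ≠ 0, the convolution f*g is absolutely convergent at every q ∈ ℤ and satisfies |(f*g)(q)| ≤ a₁^{3/4} · c₁ · λ^{1 + 1/4 + θ} for all q ∈ ℤ. -/

import Mathlib

/-- Tail bound over ℕ. -/
lemma tailN (K : ℕ) :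
    Summable (fun n : ℕ => if K < n then ((n:ℝ)^2)⁻¹ else 0) ∧
    ∑' n : ℕ, (if K < n then ((n:ℝ)^2)⁻¹ else 0) ≤ 2/((K:ℝ)+1) := by
  have hs : Summable (fun n : ℕ => if K < n then ((n:ℝ)^2)⁻¹ else 0) :=
    Summable.of_nonneg_of_le (fun n => by split <;> positivity)
      (fun n => by split
                   · exact le_rfl
                   · positivity) (Real.summable_nat_pow_inv.mpr one_lt_two)
  refine ⟨hs, hs.tsum_le_of_sum_le ?_⟩
  intro s
  have h1 : ∑ n ∈ s, (if K < n then ((n:ℝ)^2)⁻¹ else 0)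
      = ∑ n ∈ s.filter (fun n => K < n), ((n:ℝ)^2)⁻¹ := (Finset.sum_filter _ _).symm
  rw [h1]
  have h2 : s.filter (fun n => K < n) ⊆ Finset.Ioo K (s.sup id + 1) := by
    intro n hn
    simp only [Finset.mem_filter, Finset.mem_Ioo] at *
    exact ⟨hn.2, Nat.lt_succ_of_le (Finset.le_sup (f := id) hn.1)⟩
  calc ∑ n ∈ s.filter (fun n => K < n), ((n:ℝ)^2)⁻¹
      ≤ ∑ n ∈ Finset.Ioo K (s.sup id + 1), ((n:ℝ)^2)⁻¹ :=
        Finset.sum_le_sum_of_subset_of_nonneg h2 (by intros; positivity)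
    _ ≤ 2/((K:ℝ)+1) := by
        have := sum_Ioo_inv_sq_le (α := ℝ) K (s.sup id + 1)
        push_cast at this ⊢
        convert this using 2
  
/-- Tail bound over ℤ. -/
lemma tailZ (K : ℕ) :
    Summable (fun m : ℤ => if (K:ℤ) < |m| then ((m:ℝ)^2)⁻¹ else 0) ∧
    ∑' m : ℤ, (if (K:ℤ) < |m| then ((m:ℝ)^2)⁻¹ else 0) ≤ 4/((K:ℝ)+1) := by
  obtain ⟨hs, ht⟩ := tailN K
  set u : ℤ → ℝ := fun m => if (K:ℤ) < |m| then ((m:ℝ)^2)⁻¹ else 0 with hu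
  have hpos : (fun n : ℕ => u n) = fun n : ℕ => if K < n then ((n:ℝ)^2)⁻¹ else 0 := by
    funext n
    simp only [hu, Int.abs_natCast, Nat.cast_lt, Int.cast_natCast]
  have hneg : (fun n : ℕ => u (-(n+1))) =
      fun n : ℕ => if K < (n+1 : ℕ) then (((n+1:ℕ):ℝ)^2)⁻¹ else 0 := by
    funext n
    simp only [hu]
    have hc : ((K:ℤ) < |(-((n:ℤ)+1))|) ↔ K < n+1 := by
      rw [abs_neg, abs_of_nonneg (by positivity)]
      omega
    exact if_congr hc (by push_cast; ring) rfl
  have hsneg : Summable (fun n : ℕ => u (-(n+1))) := by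
    rw [hneg]
    exact (summable_nat_add_iff (f := fun n : ℕ => if K < n then ((n:ℝ)^2)⁻¹ else 0) 1).mpr hs
  have hspos : Summable (fun n : ℕ => u n) := by rw [hpos]; exact hs
  have hsum : Summable u := Summable.of_nat_of_neg_add_one hspos hsneg
  refine ⟨hsum, ?_⟩
  rw [tsum_of_nat_of_neg_add_one hspos hsneg]
  have htneg : ∑' n : ℕ, u (-(n+1)) ≤ 2/((K:ℝ)+1) := by
    rw [hneg]
    have h0 := hs.tsum_eq_zero_add
    simp only [Nat.not_lt_zero, if_false, zero_add] at h0
    rw [← h0]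
    exact ht
  have htpos : ∑' n : ℕ, u n ≤ 2/((K:ℝ)+1) := by rw [hpos]; exact ht
  have h4 : (4:ℝ)/((K:ℝ)+1) = 2/((K:ℝ)+1) + 2/((K:ℝ)+1) := by ring
  rw [h4]
  exact add_le_add htpos htneg

/-- Convolution of two sequences on `ℤ`. -/
noncomputable def conv (f g : ℤ → ℂ) (q : ℤ) : ℂ := ∑' k : ℤ, f (q - k) * g k

set_option maxHeartbeats 1000000 in
theorem stmt0 (a₁ : ℝ) (ha₁ : 0 < a₁) :
    ∃ c₁ : ℝ, 0 < c₁ ∧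
      ∀ (a₂ : ℝ), 0 < a₂ →
      ∀ (l : ℝ), l ∈ Set.Ioo (0 : ℝ) 1 →
      ∀ (θ : ℝ), 0 ≤ θ →
      ∀ (α : ℝ), 0 < α →
      ∀ (f g : ℤ → ℂ),
        (∀ q : ℤ, ‖f q‖ ≤ l) →
        (∀ q : ℤ, ‖g q‖ ≤ l ^ ((1 : ℝ) + θ)) →
        (∀ q : ℤ, q ≠ 0 → ‖f q‖ ≤ a₁ / |(q : ℝ)| ^ (2 : ℕ)) →
        (∀ q : ℤ, q ≠ 0 → ‖g q‖ ≤ a₂ / |(q : ℝ)| ^ ((1 : ℝ) + α)) →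
        ∀ q : ℤ,
          Summable (fun k : ℤ => ‖f (q - k) * g k‖) ∧
          ‖conv f g q‖ ≤ a₁ ^ ((3 : ℝ) / 4) * c₁ * l ^ ((1 : ℝ) + 1 / 4 + θ) := by
  have hA0 : 0 < a₁ ^ ((3:ℝ)/4) := Real.rpow_pos_of_pos ha₁ _
  have ha14 : 0 < a₁ ^ ((1:ℝ)/4) := Real.rpow_pos_of_pos ha₁ _
  refine ⟨(2*a₁^((3:ℝ)/4) + 3 + 4*a₁^((1:ℝ)/4))/a₁^((3:ℝ)/4), by positivity, ?_⟩
  intro a₂ ha₂ l hl θ hθ α hα f g hf hg hf2 hg2 q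
  obtain ⟨hl0, hl1⟩ := hl
  have hL0 : 0 < l ^ ((1:ℝ)+θ) := Real.rpow_pos_of_pos hl0 _
  have hl34 : 0 < l ^ ((3:ℝ)/4) := Real.rpow_pos_of_pos hl0 _
  have hl14 : 0 < l ^ ((1:ℝ)/4) := Real.rpow_pos_of_pos hl0 _
  set L : ℝ := l ^ ((1:ℝ)+θ) with hLdef
  set K : ℕ := ⌈a₁^((3:ℝ)/4) / l^((3:ℝ)/4)⌉₊ with hKdef
  have hx0 : 0 < a₁^((3:ℝ)/4) / l^((3:ℝ)/4) := by positivity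
  have hK1 : a₁^((3:ℝ)/4) / l^((3:ℝ)/4) ≤ (K:ℝ) := Nat.le_ceil _
  have hK2 : (K:ℝ) ≤ a₁^((3:ℝ)/4) / l^((3:ℝ)/4) + 1 := (Nat.ceil_lt_add_one hx0.le).le
  obtain ⟨hus, hut⟩ := tailZ K
  set u : ℤ → ℝ := fun m => if (K:ℤ) < |m| then ((m:ℝ)^2)⁻¹ else 0 with hudef
  set w : ℤ → ℝ := fun m => (if |m| ≤ (K:ℤ) then l*L else 0) + a₁ * L * u m with hwdef
  have hu_nonneg : ∀ m, 0 ≤ u m := fun m => by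
    simp only [hudef]; split <;> positivity
  have hw_nonneg : ∀ m, 0 ≤ w m := fun m => by
    have := hu_nonneg m
    simp only [hwdef]
    split <;>
      nlinarith [mul_nonneg (mul_nonneg ha₁.le hL0.le) this, mul_pos hl0 hL0]
  have hbound : ∀ k : ℤ, ‖f (q-k) * g k‖ ≤ w (q-k) := by
    intro k
    rw [norm_mul]
    by_cases hc : |q - k| ≤ (K:ℤ)
    · have h1 : ‖f (q-k)‖ * ‖g k‖ ≤ l * L :=
        mul_le_mul (hf _) (hg k) (norm_nonneg _) hl0.le
      have h2 : 0 ≤ a₁ * L * u (q - k) := by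
        have := hu_nonneg (q-k); positivity
      simp only [hwdef, if_pos hc]
      linarith
    · push_neg at hc
      have hne : q - k ≠ 0 := by
        intro h; rw [h] at hc; simp at hc; omega
      have hval : u (q-k) = (((q-k : ℤ):ℝ)^2)⁻¹ := by
        simp only [hudef, if_pos hc]
      have h1 : ‖f (q-k)‖ ≤ a₁ * (((q-k : ℤ):ℝ)^2)⁻¹ := by
        have h := hf2 (q-k) hne
        rwa [sq_abs, div_eq_mul_inv] at h
      have h2 : ‖f (q-k)‖ * ‖g k‖ ≤ (a₁ * (((q-k : ℤ):ℝ)^2)⁻¹) * L :=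
        mul_le_mul h1 (hg k) (norm_nonneg _) (by positivity)
      simp only [hwdef, if_neg (not_le.mpr hc), hval, zero_add]
      linarith [h2]
  have hsw1 : Summable (fun m : ℤ => if |m| ≤ (K:ℤ) then l*L else 0) := by
    apply summable_of_ne_finset_zero (s := Finset.Icc (-(K:ℤ)) K)
    intro m hm
    rw [if_neg]
    intro habs
    exact hm (Finset.mem_Icc.mpr (abs_le.mp habs))
  have hsw2 : Summable (fun m : ℤ => a₁ * L * u m) := hus.mul_left _
  have hsw : Summable w := hsw1.add hsw2
  have hswq : Summable (fun k : ℤ => w (q - k)) :=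
    (Equiv.subLeft q).summable_iff.mpr hsw
  have hsum : Summable (fun k : ℤ => ‖f (q-k) * g k‖) :=
    Summable.of_nonneg_of_le (fun k => norm_nonneg _) hbound hswq
  refine ⟨hsum, ?_⟩
  have h1 : ‖conv f g q‖ ≤ ∑' m : ℤ, w m := by
    calc ‖conv f g q‖ ≤ ∑' k : ℤ, ‖f (q-k) * g k‖ := norm_tsum_le_tsum_norm hsum
      _ ≤ ∑' k : ℤ, w (q - k) := Summable.tsum_le_tsum hbound hsum hswq
      _ = ∑' m : ℤ, w m := (Equiv.subLeft q).tsum_eq w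
  have hT1 : ∑' m : ℤ, (if |m| ≤ (K:ℤ) then l*L else 0) = (2*K+1 : ℕ) * (l * L) := by
    rw [tsum_eq_sum (s := Finset.Icc (-(K:ℤ)) K)
      (fun m hm => by
        rw [if_neg]; intro habs; exact hm (Finset.mem_Icc.mpr (abs_le.mp habs)))]
    rw [Finset.sum_congr rfl (fun m hm => if_pos (abs_le.mpr (Finset.mem_Icc.mp hm)))]
    rw [Finset.sum_const, Int.card_Icc]
    have : ((K:ℤ) + 1 - -(K:ℤ)).toNat = 2*K+1 := by omega
    rw [this, nsmul_eq_mul]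
  have hT2 : ∑' m : ℤ, (a₁ * L * u m) ≤ a₁ * L * (4/((K:ℝ)+1)) := by
    rw [tsum_mul_left]
    exact mul_le_mul_of_nonneg_left hut (by positivity)
  have hsplit : ∑' m : ℤ, w m
      = ∑' m : ℤ, (if |m| ≤ (K:ℤ) then l*L else 0) + ∑' m : ℤ, (a₁ * L * u m) :=
    Summable.tsum_add hsw1 hsw2
  -- arithmetic
  have hKub : (2*K+1 : ℕ) * (l * L) ≤ (2*(a₁^((3:ℝ)/4)/l^((3:ℝ)/4)) + 3) * (l * L) := by
    apply mul_le_mul_of_nonneg_right _ (by positivity)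
    push_cast
    linarith
  have hKlb : a₁ * L * (4/((K:ℝ)+1)) ≤ a₁ * L * (4 * l^((3:ℝ)/4) / a₁^((3:ℝ)/4)) := by
    apply mul_le_mul_of_nonneg_left _ (by positivity)
    rw [div_le_div_iff₀ (by linarith) (by positivity)]
    calc 4 * a₁^((3:ℝ)/4) ≤ 4 * (l^((3:ℝ)/4) * ((K:ℝ)+1)) := by
          rw [div_le_iff₀ hl34] at hK1
          nlinarith
      _ = 4 * l^((3:ℝ)/4) * ((K:ℝ)+1) := by ring
  -- rpow algebra
  have e1 : l^((1:ℝ)/4) * l^((3:ℝ)/4) = l := by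
    rw [← Real.rpow_add hl0]
    norm_num
  have e2 : a₁^((1:ℝ)/4) * a₁^((3:ℝ)/4) = a₁ := by
    rw [← Real.rpow_add ha₁]
    norm_num
  have e1' : l / l^((3:ℝ)/4) = l^((1:ℝ)/4) := by
    rw [eq_comm, eq_div_iff hl34.ne']; exact e1
  have e2' : a₁ / a₁^((3:ℝ)/4) = a₁^((1:ℝ)/4) := by
    rw [eq_comm, eq_div_iff hA0.ne']; exact e2
  have e3 : l^((1:ℝ)+1/4+θ) = l^((1:ℝ)/4) * L := by
    rw [hLdef, ← Real.rpow_add hl0]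
    congr 1
    ring
  have hll : l ≤ l^((1:ℝ)/4) := by
    nth_rewrite 1 [← Real.rpow_one l]
    exact Real.rpow_le_rpow_of_exponent_ge hl0 hl1.le (by norm_num)
  have hl3414 : l^((3:ℝ)/4) ≤ l^((1:ℝ)/4) :=
    Real.rpow_le_rpow_of_exponent_ge hl0 hl1.le (by norm_num)
  have hT1' : (2*(a₁^((3:ℝ)/4)/l^((3:ℝ)/4)) + 3) * (l*L)
      = 2*a₁^((3:ℝ)/4)*l^((1:ℝ)/4)*L + 3*(l*L) := by
    rw [← e1']
    field_simp
  have hT2' : a₁ * L * (4 * l^((3:ℝ)/4) / a₁^((3:ℝ)/4))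
      = 4*a₁^((1:ℝ)/4)*l^((3:ℝ)/4)*L := by
    rw [← e2']
    field_simp
  have hRHS : a₁^((3:ℝ)/4) * ((2*a₁^((3:ℝ)/4) + 3 + 4*a₁^((1:ℝ)/4))/a₁^((3:ℝ)/4)) * l^((1:ℝ)+1/4+θ)
      = (2*a₁^((3:ℝ)/4) + 3 + 4*a₁^((1:ℝ)/4)) * (l^((1:ℝ)/4) * L) := by
    rw [e3]
    field_simp
  rw [hRHS]
  have hfinal : 2*a₁^((3:ℝ)/4)*l^((1:ℝ)/4)*L + 3*(l*L) + 4*a₁^((1:ℝ)/4)*l^((3:ℝ)/4)*L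
      ≤ (2*a₁^((3:ℝ)/4) + 3 + 4*a₁^((1:ℝ)/4)) * (l^((1:ℝ)/4) * L) := by
    nlinarith [mul_nonneg (sub_nonneg.mpr hll) hL0.le,
      mul_nonneg (mul_nonneg ha14.le (sub_nonneg.mpr hl3414)) hL0.le]
  calc ‖conv f g q‖ ≤ ∑' m : ℤ, w m := h1
    _ = ∑' m : ℤ, (if |m| ≤ (K:ℤ) then l*L else 0) + ∑' m : ℤ, (a₁ * L * u m) := hsplit
    _ ≤ (2*(a₁^((3:ℝ)/4)/l^((3:ℝ)/4)) + 3) * (l*L) + a₁ * L * (4 * l^((3:ℝ)/4) / a₁^((3:ℝ)/4)) := by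
        rw [hT1]
        exact add_le_add hKub (hT2.trans hKlb)
    _ = 2*a₁^((3:ℝ)/4)*l^((1:ℝ)/4)*L + 3*(l*L) + 4*a₁^((1:ℝ)/4)*l^((3:ℝ)/4)*L := by
        rw [hT1', hT2']
    _ ≤ (2*a₁^((3:ℝ)/4) + 3 + 4*a₁^((1:ℝ)/4)) * (l^((1:ℝ)/4) * L) := hfinal
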